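/- arXiv:1805.02539 — 4 statements merged into one kernel-verified Lean document; each statement's English description precedes it below -/
import Mathlib

section
/- Let F : P → ModuleCat k be a functor on a poset P. The collection of subfunctors K ⊆ F such that the quotient F/K has all structure maps injective, ordered by reverse inclusion, has a maximal element; i.e., F has a minimal such kernel K, and hence a minimal quotient-monocosheaf F/K. -/
open CategoryTheory

/-- A subfunctor of a covariant functor of vector spaces on a poset. -/
structure CoSubfunctor {k : Type} [Field k] {P : Type} [PartialOrder P]
    (F : P ⥤ ModuleCat k) where
  toFun : ∀ p : P, Submodule k (F.obj p)
  map_le : ∀ (p q : P) (h : p ≤ q),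
    Submodule.map (F.map (homOfLE h)).hom (toFun p) ≤ toFun q

/-- A mono-kernel: the quotient `F/K` has injective structure maps. -/
def CoSubfunctor.IsMonoKernel {k : Type} [Field k] {P : Type} [PartialOrder P]
    {F : P ⥤ ModuleCat k} (K : CoSubfunctor F) : Prop :=
  ∀ (p q : P) (h : p ≤ q) (x : F.obj p),
    F.map (homOfLE h) x ∈ K.toFun q → x ∈ K.toFun p

/-- `F` has a minimal mono-kernel, i.e. a maximal element for reverse
pointwise inclusion; hence a minimal quotient-monocosheaf `F/K`. -/
theorem stmt_5 {k : Type} [Field k] {P : Type} [PartialOrder P]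
    (F : P ⥤ ModuleCat k) :
    ∃ K : CoSubfunctor F, K.IsMonoKernel ∧
      ∀ K' : CoSubfunctor F, K'.IsMonoKernel →
        (∀ p : P, K'.toFun p ≤ K.toFun p) → ∀ p : P, K'.toFun p = K.toFun p := by
  refine ⟨⟨fun p => ⨅ K : {K : CoSubfunctor F // K.IsMonoKernel}, K.1.toFun p,
    fun p q h => ?_⟩, ?_, ?_⟩
  · rintro y ⟨x, hx, rfl⟩
    simp only [SetLike.mem_coe, Submodule.mem_iInf] at hx
    rw [Submodule.mem_iInf]
    exact fun K => K.1.map_le p q h ⟨x, hx K, rfl⟩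
  · intro p q h x hx
    rw [Submodule.mem_iInf] at hx ⊢
    exact fun K => K.2 p q h x (hx K)
  · intro K' hK' hle p
    refine le_antisymm (hle p) (iInf_le_of_le ⟨K', hK'⟩ le_rfl)
end

section
/- Let P be a poset, E : Pᵒᵖ → ModuleCat k a presheaf with all restriction maps surjective, M : P → ModuleCat k a functor with all structure maps injective, and suppose one is given a family of maps I_p : E(p) → M(p) such that for all p ≤ q the square commutes: I_p ∘ E(p ≤ q) = M(p ≤ q) ∘ I_q (where E(p ≤ q) : E(q) → E(p) is restriction). Then for every p ≤ q, the structure map M(p ≤ q) restricts to an isomorphism from image(I_p) onto image(I_q). -/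
open CategoryTheory Opposite

/-- for an episheaf `E`, a monocosheaf `M`, and a compatible family of
maps `I p : E(p) → M(p)`, the structure map `M(p ≤ q)` restricts to an isomorphism
of `image (I p)` onto `image (I q)`. -/
theorem stmt_6 {k : Type} [Field k] {P : Type} [PartialOrder P]
    (E : Pᵒᵖ ⥤ ModuleCat k) (M : P ⥤ ModuleCat k)
    (hE : ∀ (p q : P) (h : p ≤ q), Function.Surjective (E.map (homOfLE h).op))
    (hM : ∀ (p q : P) (h : p ≤ q), Function.Injective (M.map (homOfLE h)))
    (I : ∀ p : P, E.obj (op p) →ₗ[k] M.obj p)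
    (hI : ∀ (p q : P) (h : p ≤ q) (x : E.obj (op q)),
      M.map (homOfLE h) (I p (E.map (homOfLE h).op x)) = I q x)
    (p q : P) (h : p ≤ q) :
    Submodule.map (M.map (homOfLE h)).hom (LinearMap.range (I p)) = LinearMap.range (I q)
      ∧ Set.InjOn (M.map (homOfLE h)) (LinearMap.range (I p)) := by
  constructor
  · apply le_antisymm
    · rintro _ ⟨_, ⟨x, rfl⟩, rfl⟩
      obtain ⟨y, rfl⟩ := hE p q h x
      exact ⟨y, (hI p q h y).symm⟩
    · rintro _ ⟨y, rfl⟩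
      exact ⟨I p (E.map (homOfLE h).op y), ⟨_, rfl⟩, hI p q h y⟩
  · exact fun a _ b _ hab => hM p q h hab
end

section
/- Let F : Pᵒᵖ → ModuleCat k and G : Pᵒᵖ → ModuleCat k be presheaves on a poset P, α : F ⟶ G a natural transformation, and let D ⊆ F, E ⊆ G be the maximal sub-episheaves of F and G respectively. Then α carries D into E; i.e., for all p, α_p(D(p)) ⊆ E(p), so there is an induced natural transformation D ⟶ E making the square with the inclusions commute. -/
open CategoryTheory Opposite

/-- A subfunctor of a presheaf of vector spaces on a poset. -/
structure Subfunctor {k : Type} [Field k] {P : Type} [PartialOrder P]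
    (F : Pᵒᵖ ⥤ ModuleCat k) where
  toFun : ∀ p : P, Submodule k (F.obj (op p))
  map_le : ∀ (p q : P) (h : p ≤ q),
    Submodule.map (F.map (homOfLE h).op).hom (toFun q) ≤ toFun p

/-- A sub-episheaf: all induced restriction maps are surjective. -/
def Subfunctor.IsEpisheaf {k : Type} [Field k] {P : Type} [PartialOrder P]
    {F : Pᵒᵖ ⥤ ModuleCat k} (E : Subfunctor F) : Prop :=
  ∀ (p q : P) (h : p ≤ q),
    Submodule.map (F.map (homOfLE h).op).hom (E.toFun q) = E.toFun p

lemma image_map_eq {k : Type} [Field k] {P : Type} [PartialOrder P]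
    {F G : Pᵒᵖ ⥤ ModuleCat k} (α : F ⟶ G)
    (D : Subfunctor F) (hD : D.IsEpisheaf) (p q : P) (h : p ≤ q) :
    Submodule.map (G.map (homOfLE h).op).hom
        (Submodule.map (α.app (op q)).hom (D.toFun q)) =
      Submodule.map (α.app (op p)).hom (D.toFun p) := by
  rw [← Submodule.map_comp, ← hD p q h, ← Submodule.map_comp]
  congr 1
  exact congrArg ModuleCat.Hom.hom (α.naturality (homOfLE h).op).symm

/-- a natural transformation `α : F ⟶ G` carries the maximal
sub-episheaf `D` of `F` into the maximal sub-episheaf `E` of `G`; hence epification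
is functorial. -/
theorem stmt_9 {k : Type} [Field k] {P : Type} [PartialOrder P]
    (F G : Pᵒᵖ ⥤ ModuleCat k) (α : F ⟶ G)
    (D : Subfunctor F) (hD : D.IsEpisheaf)
    (hDmax : ∀ D' : Subfunctor F, D'.IsEpisheaf →
      (∀ p : P, D.toFun p ≤ D'.toFun p) → ∀ p : P, D'.toFun p = D.toFun p)
    (E : Subfunctor G) (hEepi : E.IsEpisheaf)
    (hEmax : ∀ E' : Subfunctor G, E'.IsEpisheaf →
      (∀ p : P, E.toFun p ≤ E'.toFun p) → ∀ p : P, E'.toFun p = E.toFun p)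
    (p : P) :
    Submodule.map (α.app (op p)).hom (D.toFun p) ≤ E.toFun p := by
  set E' : Subfunctor G :=
    { toFun := fun p => E.toFun p ⊔ Submodule.map (α.app (op p)).hom (D.toFun p)
      map_le := fun p q h => by
        rw [Submodule.map_sup, hEepi p q h, image_map_eq α D hD p q h] } with hE'
  have hepi : E'.IsEpisheaf := fun p q h => by
    simp only [hE', Submodule.map_sup, hEepi p q h, image_map_eq α D hD p q h]
  have := hEmax E' hepi (fun p => le_sup_left) p
  calc Submodule.map (α.app (op p)).hom (D.toFun p) ≤ E'.toFun p := le_sup_right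
    _ = E.toFun p := this
end

section
/- Let F, G : P → ModuleCat k be covariant functors on a poset P, α : F ⟶ G a natural transformation, and let K_F ⊆ F, K_G ⊆ G be the minimal mono-kernels of F and G respectively (so F/K_F and G/K_G are the minimal quotient-monocosheaves). Then α carries K_F into K_G; i.e., for all p, α_p(K_F(p)) ⊆ K_G(p), so α descends to a natural transformation F/K_F ⟶ G/K_G. -/
open CategoryTheory

/-- a natural transformation `α : F ⟶ G` carries the minimal
mono-kernel `K_F` of `F` into the minimal mono-kernel `K_G` of `G`; hence `α`
descends to the minimal quotient-monocosheaves and monofication is functorial. -/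
theorem stmt_10 {k : Type} [Field k] {P : Type} [PartialOrder P]
    (F G : P ⥤ ModuleCat k) (α : F ⟶ G)
    (KF : CoSubfunctor F) (hKF : KF.IsMonoKernel)
    (hKFmin : ∀ K' : CoSubfunctor F, K'.IsMonoKernel →
      (∀ p : P, K'.toFun p ≤ KF.toFun p) → ∀ p : P, K'.toFun p = KF.toFun p)
    (KG : CoSubfunctor G) (hKG : KG.IsMonoKernel)
    (hKGmin : ∀ K' : CoSubfunctor G, K'.IsMonoKernel →
      (∀ p : P, K'.toFun p ≤ KG.toFun p) → ∀ p : P, K'.toFun p = KG.toFun p)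
    (p : P) :
    Submodule.map (α.app p).hom (KF.toFun p) ≤ KG.toFun p := by
  have nat : ∀ (a b : P) (h : a ≤ b) (x : F.obj a),
      α.app b (F.map (homOfLE h) x) = G.map (homOfLE h) (α.app a x) := by
    intro a b h x
    have := α.naturality (homOfLE h)
    have := ConcreteCategory.congr_hom this x
    simpa using this
  -- the intersection of KF with the α-preimage of KG
  set K' : CoSubfunctor F :=
    { toFun := fun q => KF.toFun q ⊓ (KG.toFun q).comap (α.app q).hom
      map_le := by
        intro a b h x hx
        obtain ⟨y, hy, rfl⟩ := hx
        refine ⟨KF.map_le a b h ⟨y, hy.1, rfl⟩, ?_⟩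
        have : α.app b (F.map (homOfLE h) y) = G.map (homOfLE h) (α.app a y) :=
          nat a b h y
        have : (α.app b) ((F.map (homOfLE h)) y) ∈ KG.toFun b := by
          rw [this]; exact KG.map_le a b h ⟨α.app a y, hy.2, rfl⟩
        exact this } with hK'
  have hK'mono : K'.IsMonoKernel := by
    intro a b h x hx
    refine ⟨hKF a b h x hx.1, ?_⟩
    have hx2 : G.map (homOfLE h) (α.app a x) ∈ KG.toFun b := by
      rw [← nat a b h x]; exact hx.2
    exact hKG a b h (α.app a x) hx2
  have hle : ∀ q : P, K'.toFun q ≤ KF.toFun q := fun q => inf_le_left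
  have heq := hKFmin K' hK'mono hle p
  rintro _ ⟨x, hx, rfl⟩
  rw [← heq] at hx
  exact hx.2
end
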